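/- Suppose G is not ec-bipartite. Then flooding terminates after round j, where j is the largest index with R j ≠ ∅, and j satisfies e(I) < j ≤ min{ d(I, g) + e(g) + 1 : g ∈ V is an ec node }, where e(g) = max{dist(g,g') : g' ∈ V} is the eccentricity of g. -/

import Mathlib

open SimpleGraph

section Aux

variable {V : Type*} (G : SimpleGraph V) (I : Set V)

/-- There is a walk of length `n` from some initial node to `g`. -/
def WLp (g : V) (n : ℕ) : Prop := ∃ g0 ∈ I, ∃ w : G.Walk g0 g, w.length = n

/-- The minimal length of a walk from `I` to `g` of parity `p`. -/
noncomputable def mparity (g : V) (p : ℕ) : ℕ :=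
  sInf {n : ℕ | WLp G I g n ∧ n % 2 = p % 2}

variable {G I}

lemma WLp_extend {g g' : V} {n : ℕ} (h : G.Adj g g') (hw : WLp G I g n) :
    WLp G I g' (n + 1) := by
  obtain ⟨g0, hg0, w, rfl⟩ := hw
  exact ⟨g0, hg0, w.concat h, by simp [Walk.length_concat]⟩

lemma walk_last_step {u v : V} (w : G.Walk u v) :
    ∀ n, w.length = n + 1 → ∃ x, G.Adj x v ∧ ∃ q : G.Walk u x, q.length = n := by
  induction w using SimpleGraph.Walk.concatRec with
  | Hnil => intro n hn; simp at hn
  | Hconcat q h _ =>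
    intro n hn
    rw [Walk.length_concat] at hn
    exact ⟨_, h, q, by omega⟩

lemma WLp_decompose {g : V} {n : ℕ} (hw : WLp G I g (n + 1)) :
    ∃ x, G.Adj x g ∧ WLp G I x n := by
  obtain ⟨g0, hg0, w, hwl⟩ := hw
  obtain ⟨x, hx, q, hq⟩ := walk_last_step w n hwl
  exact ⟨x, hx, g0, hg0, q, hq⟩

lemma mparity_congr {g : V} {p q : ℕ} (h : p % 2 = q % 2) :
    mparity G I g p = mparity G I g q := by
  unfold mparity
  congr 1
  ext n
  simp [h]

end Aux

/-- Theorem 3.9: if `G` is not ec-bipartite (it has an ec node), then flooding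
terminates after round `j`, where `j` is the largest index with `R j ≠ ∅`, and
`e(I) < j ≤ min { d(I,g) + e(g) + 1 : g an ec node }`. -/
theorem amnesiac_flooding_termination_bounds
    {V : Type*} [Fintype V] (G : SimpleGraph V) (hconn : G.Connected)
    (I : Set V) (hI : I.Nonempty)
    (S : ℕ → V → V → Prop) (R : ℕ → Set V) (dI : V → ℕ)
    (hS1 : ∀ g g' : V, S 1 g g' ↔ g ∈ I ∧ G.Adj g g')
    (hS : ∀ i : ℕ, 1 ≤ i → ∀ g g' : V,
      S (i + 1) g g' ↔ G.Adj g g' ∧ (∃ h, S i h g) ∧ ¬ S i g' g)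
    (hR0 : R 0 = I)
    (hR : ∀ i : ℕ, 1 ≤ i → R i = {g : V | ∃ h, S i h g})
    (hdI : ∀ g : V, dI g = sInf {n : ℕ | ∃ g0 ∈ I, G.dist g0 g = n})
    (hec : ∃ g g' : V, G.Adj g g' ∧ dI g' = dI g) :
    ∃ j : ℕ, (R j ≠ ∅ ∧ ∀ k : ℕ, j < k → R k = ∅) ∧
      Finset.univ.sup dI < j ∧
      ∀ g : V, (∃ g' : V, G.Adj g g' ∧ dI g' = dI g) →
        j ≤ dI g + Finset.univ.sup (fun g' => G.dist g g') + 1 := by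
  classical
  obtain ⟨v0, hv0⟩ := hI
  haveI : Nonempty V := ⟨v0⟩
  set m : V → ℕ → ℕ := mparity G I with hm
  -- a walk of length `dI v` from `I` to each `v`
  have hWLd : ∀ v : V, WLp G I v (dI v) := by
    intro v
    have hnon : {n : ℕ | ∃ g0 ∈ I, G.dist g0 v = n}.Nonempty :=
      ⟨G.dist v0 v, v0, hv0, rfl⟩
    have hmem := Nat.sInf_mem hnon
    obtain ⟨g0, hg0, hd⟩ := hmem
    obtain ⟨w, hw⟩ := hconn.exists_walk_length_eq_dist g0 v
    exact ⟨g0, hg0, w, by rw [hw, hd, ← hdI v]⟩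
  -- from any ec node, walks of both parities to every node
  have hboth : ∀ x y : V, G.Adj x y → dI y = dI x → ∀ g : V,
      WLp G I g (dI x + G.dist x g) ∧ WLp G I g (dI x + G.dist x g + 1) := by
    intro x y hxy hdy g
    have h1 : WLp G I x (dI x) := hWLd x
    have h2 : WLp G I x (dI x + 1) := by
      have hy := hWLd y
      rw [hdy] at hy
      exact WLp_extend hxy.symm hy
    obtain ⟨w, hw⟩ := hconn.exists_walk_length_eq_dist x g
    have app : ∀ k, WLp G I x k → WLp G I g (k + G.dist x g) := by
      rintro k ⟨g0, hg0, u, hu⟩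
      exact ⟨g0, hg0, u.append w, by simp [Walk.length_append, hu, hw]⟩
    refine ⟨app _ h1, ?_⟩
    have := app _ h2
    have heq : dI x + 1 + G.dist x g = dI x + G.dist x g + 1 := by omega
    rwa [heq] at this
  obtain ⟨a, b, hab, hdab⟩ := hec
  -- nonemptiness of the defining sets of `m`
  have hne : ∀ (g : V) (p : ℕ), {n : ℕ | WLp G I g n ∧ n % 2 = p % 2}.Nonempty := by
    intro g p
    obtain ⟨h1, h2⟩ := hboth a b hab hdab g
    by_cases hp : (dI a + G.dist a g) % 2 = p % 2
    · exact ⟨_, h1, hp⟩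
    · exact ⟨_, h2, by omega⟩
  have hmem : ∀ (g : V) (p : ℕ), WLp G I g (m g p) ∧ m g p % 2 = p % 2 :=
    fun g p => Nat.sInf_mem (hne g p)
  have hle : ∀ (g : V) (p n : ℕ), WLp G I g n → n % 2 = p % 2 → m g p ≤ n :=
    fun g p n h1 h2 => Nat.sInf_le ⟨h1, h2⟩
  -- dI is a lower bound for m
  have hdIle : ∀ (g : V) (p : ℕ), dI g ≤ m g p := by
    intro g p
    obtain ⟨⟨g0, hg0, w, hw⟩, _⟩ := hmem g p
    rw [hdI g]
    refine le_trans (Nat.sInf_le ⟨g0, hg0, rfl⟩) ?_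
    rw [← hw]
    exact SimpleGraph.dist_le w
  -- m g 0 = 0 ↔ g ∈ I
  have hm0 : ∀ g : V, m g 0 = 0 ↔ g ∈ I := by
    intro g
    constructor
    · intro h0
      have := (hmem g 0).1
      rw [h0] at this
      obtain ⟨g0, hg0, w, hw⟩ := this
      have := Walk.eq_of_length_eq_zero hw
      rwa [← this]
    · intro hgI
      have h0 : WLp G I g 0 := ⟨g, hgI, Walk.nil, rfl⟩
      exact Nat.le_antisymm (hle g 0 0 h0 rfl) (Nat.zero_le _)
  -- turning the characterization of S into one for "received in round k+1"
  have cor_of : ∀ k : ℕ,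
      (∀ g g' : V, S (k + 1) g g' ↔ (G.Adj g g' ∧ m g k = k ∧ m g' (k + 1) = k + 1)) →
      ∀ v : V, ((∃ h, S (k + 1) h v) ↔ m v (k + 1) = k + 1) := by
    intro k hchar v
    constructor
    · rintro ⟨h, hh⟩
      exact ((hchar h v).1 hh).2.2
    · intro hv
      have hw : WLp G I v (k + 1) := by
        have := (hmem v (k + 1)).1
        rwa [hv] at this
      obtain ⟨x, hxv, hwx⟩ := WLp_decompose hw
      have hxle : m x k ≤ k := hle x k k hwx rfl
      have hxk : m x k = k := by
        by_contra hne'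
        have hpar := (hmem x k).2
        have hext : WLp G I v (m x k + 1) := WLp_extend hxv (hmem x k).1
        have : m v (k + 1) ≤ m x k + 1 := hle v (k + 1) _ hext (by omega)
        omega
      exact ⟨x, (hchar x v).2 ⟨hxv, hxk, hv⟩⟩
  -- the main characterization of S
  have char : ∀ k : ℕ, ∀ g g' : V,
      S (k + 1) g g' ↔ (G.Adj g g' ∧ m g k = k ∧ m g' (k + 1) = k + 1) := by
    intro k
    induction k with
    | zero =>
      intro g g'
      rw [hS1]
      constructor
      · rintro ⟨hgI, hadj⟩
        refine ⟨hadj, (hm0 g).2 hgI, ?_⟩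
        have h1 : WLp G I g' 1 := ⟨g, hgI, Walk.cons hadj Walk.nil, rfl⟩
        have hle1 : m g' 1 ≤ 1 := hle g' 1 1 h1 rfl
        have hodd := (hmem g' 1).2
        show m g' 1 = 1
        omega
      · rintro ⟨hadj, h0, _⟩
        exact ⟨(hm0 g).1 h0, hadj⟩
    | succ k ih =>
      intro g g'
      have cor := cor_of k ih
      rw [hS (k + 1) (by omega), cor g]
      constructor
      · rintro ⟨hadj, hg, hns⟩
        refine ⟨hadj, hg, ?_⟩
        have hnot : m g' k ≠ k := by
          intro h'
          exact hns ((ih g' g).2 ⟨hadj.symm, h', hg⟩)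
        have hparg' := (hmem g' k).2
        -- upper bound : m g' k ≤ k + 2
        have hub : m g' k ≤ k + 2 := by
          have hwg : WLp G I g (k + 1) := by
            have := (hmem g (k + 1)).1
            rwa [hg] at this
          have := WLp_extend hadj hwg
          exact hle g' k (k + 2) this (by omega)
        -- lower bound : ¬ (m g' k < k)
        have hlb : ¬ m g' k < k := by
          intro hlt
          have hext : WLp G I g (m g' k + 1) := WLp_extend hadj.symm (hmem g' k).1
          have hparg := (hmem g (k + 1)).2
          have : m g (k + 1) ≤ m g' k + 1 := hle g (k + 1) _ hext (by omega)
          omega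
        have hval : m g' k = k + 2 := by omega
        have : m g' (k + 1 + 1) = m g' k := mparity_congr (by omega)
        omega
      · rintro ⟨hadj, hg, h2⟩
        refine ⟨hadj, hg, ?_⟩
        intro hs
        have := ((ih g' g).1 hs).2.1
        have heqm : m g' (k + 1 + 1) = m g' k := mparity_congr (by omega)
        omega
  have cor : ∀ (k : ℕ) (v : V), (∃ h, S (k + 1) h v) ↔ m v (k + 1) = k + 1 :=
    fun k => cor_of k (char k)
  -- characterization of rounds
  have hRchar : ∀ i : ℕ, 1 ≤ i → ∀ g : V, (g ∈ R i ↔ m g i = i) := by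
    intro i hi g
    obtain ⟨k, rfl⟩ : ∃ k, i = k + 1 := ⟨i - 1, by omega⟩
    rw [hR _ (by omega)]
    exact cor k g
  -- definition of j
  set j : ℕ := Finset.univ.sup (fun g : V => max (m g 0) (m g 1)) with hj
  have hmlej : ∀ (g : V) (p : ℕ), m g p ≤ j := by
    intro g p
    have h2 : m g p = m g 0 ∨ m g p = m g 1 := by
      rcases Nat.mod_two_eq_zero_or_one p with h | h
      · exact Or.inl (mparity_congr (by omega))
      · exact Or.inr (mparity_congr (by omega))
    have hsup : max (m g 0) (m g 1) ≤ j := by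
      rw [hj]
      exact Finset.le_sup (f := fun g : V => max (m g 0) (m g 1)) (Finset.mem_univ g)
    rcases h2 with h | h <;> omega
  have hj1 : 1 ≤ j := by
    have := (hmem v0 1).2
    have := hmlej v0 1
    omega
  refine ⟨j, ⟨?_, ?_⟩, ?_, ?_⟩
  · -- R j ≠ ∅
    obtain ⟨gm, _, hgm⟩ := Finset.exists_mem_eq_sup Finset.univ
      ⟨v0, Finset.mem_univ v0⟩ (fun g : V => max (m g 0) (m g 1))
    have hjm : j = max (m gm 0) (m gm 1) := hgm
    have hp0 := (hmem gm 0).2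
    have hp1 := (hmem gm 1).2
    have hmj : m gm j = j := by
      rcases max_cases (m gm 0) (m gm 1) with ⟨hmax, _⟩ | ⟨hmax, _⟩
      · have hjeq : j = m gm 0 := by omega
        have : m gm j = m gm 0 := mparity_congr (by omega)
        omega
      · have hjeq : j = m gm 1 := by omega
        have : m gm j = m gm 1 := mparity_congr (by omega)
        omega
    have : gm ∈ R j := (hRchar j hj1 gm).2 hmj
    intro hemp
    rw [hemp] at this
    exact this
  · -- later rounds are empty
    intro k hk
    ext g
    simp only [Set.mem_empty_iff_false, iff_false]
    intro hg
    have := (hRchar k (by omega) g).1 hg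
    have := hmlej g k
    omega
  · -- eccentricity lower bound
    have hbot : (⊥ : ℕ) < j := by
      simpa using Nat.lt_of_succ_le hj1
    rw [Finset.sup_lt_iff hbot]
    intro g _
    have h0 := hdIle g 0
    have h1 := hdIle g 1
    have hp0 := (hmem g 0).2
    have hp1 := (hmem g 1).2
    have hj0 := hmlej g 0
    have hj1' := hmlej g 1
    omega
  · -- upper bound via ec nodes
    rintro g ⟨g', hadj, hdg'⟩
    rw [hj]
    apply Finset.sup_le
    intro v _
    obtain ⟨hD, hD1⟩ := hboth g g' hadj hdg' v
    have hdist : G.dist g v ≤ Finset.univ.sup (fun g' => G.dist g g') :=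
      Finset.le_sup (Finset.mem_univ v)
    set D := dI g + G.dist g v with hDdef
    have h0 : m v 0 ≤ D + 1 := by
      by_cases hp : D % 2 = 0
      · exact le_trans (hle v 0 D hD (by omega)) (by omega)
      · exact hle v 0 (D + 1) hD1 (by omega)
    have h1 : m v 1 ≤ D + 1 := by
      by_cases hp : D % 2 = 1
      · exact le_trans (hle v 1 D hD (by omega)) (by omega)
      · exact hle v 1 (D + 1) hD1 (by omega)
    have : D + 1 ≤ dI g + Finset.univ.sup (fun g' => G.dist g g') + 1 := by omega
    omega
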